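/- arXiv:1305.3028 — 2 statements merged into one kernel-verified Lean document; each statement's English description precedes it below -/
import Mathlib

section
/- For every real x with −2 ≤ x ≤ 2, one has (1/(2π)) ∫_{−2}^{2} log|x − t| · √(4 − t²) dt = x²/4 − 1/2. Consequently, the total electrostatic potential U(x) = x²/2 − 2∫_{−2}^{2} log|x − t| · (√(4 − t²)/(2π)) dt is identically equal to 1 on [−2, 2]. -/
open Real MeasureTheory intervalIntegral Set

noncomputable def lsin (u : ℝ) : ℝ := Real.log |Real.sin u|

lemma lsin_periodic : Function.Periodic lsin π := by
  intro u; simp [lsin, Real.sin_add_pi]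

lemma lsin_reflect (u : ℝ) : lsin (π - u) = lsin u := by
  simp [lsin, Real.sin_pi_sub]

lemma lsin_meas : Measurable lsin :=
  (Real.measurable_log.comp (measurable_abs.comp Real.measurable_sin))

lemma lsin_int_half : IntervalIntegrable lsin volume 0 (π/2) := by
  rw [intervalIntegrable_iff_integrableOn_Ioc_of_le (by positivity)]
  have hmeas : AEStronglyMeasurable lsin (volume.restrict (Ioc 0 (π/2))) :=
    lsin_meas.aestronglyMeasurable
  have hbound : IntegrableOn (fun u : ℝ => Real.log (π/2) + 2 * u ^ (-1/2 : ℝ)) (Ioc 0 (π/2)) volume := by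
    apply Integrable.add (integrableOn_const (by simp) (by simp))
    have := (intervalIntegrable_rpow' (a := 0) (b := π/2) (r := (-1/2 : ℝ)) (by norm_num)).const_mul 2
    rw [intervalIntegrable_iff_integrableOn_Ioc_of_le (by positivity)] at this
    exact this
  refine Integrable.mono hbound hmeas ?_
  filter_upwards [ae_restrict_mem measurableSet_Ioc] with u hu
  have hu0 : 0 < u := hu.1
  have hu2 : u ≤ π/2 := hu.2
  have hsin : 0 < Real.sin u := Real.sin_pos_of_pos_of_lt_pi hu0 (lt_of_le_of_lt hu2 (by linarith [Real.pi_pos]))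
  have hjordan : 2 / π * u ≤ Real.sin u := Real.mul_le_sin hu0.le hu2
  have h1 : |lsin u| = - Real.log (Real.sin u) := by
    rw [lsin, abs_of_pos hsin, abs_of_nonpos (Real.log_nonpos hsin.le (Real.sin_le_one u))]
  rw [Real.norm_eq_abs, h1]
  have h2 : Real.log (2/π * u) ≤ Real.log (Real.sin u) :=
    Real.log_le_log (by positivity) hjordan
  have h3 : Real.log (2/π*u) = Real.log u - Real.log (π/2) := by
    rw [show (2/π) * u = u / (π/2) by field_simp, Real.log_div hu0.ne' (by positivity)]
  -- -log u ≤ 2 * u^(-1/2)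
  have h4 : - Real.log u ≤ 2 * u ^ (-1/2 : ℝ) := by
    have hy : (0:ℝ) < u ^ (-1/2 : ℝ) := Real.rpow_pos_of_pos hu0 _
    have := Real.log_le_sub_one_of_pos hy
    have hlog : Real.log (u ^ (-1/2:ℝ)) = (-1/2) * Real.log u := Real.log_rpow hu0 _
    nlinarith [hy.le]
  have habs : ‖Real.log (π/2) + 2 * u ^ (-1/2:ℝ)‖ = Real.log (π/2) + 2 * u ^ (-1/2:ℝ) := by
    rw [Real.norm_eq_abs, abs_of_nonneg]
    have : (0:ℝ) ≤ Real.log (π/2) := Real.log_nonneg (by linarith [Real.pi_gt_three])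
    positivity
  rw [habs]
  linarith

lemma lsin_int_0pi : IntervalIntegrable lsin volume 0 π := by
  have h2 : IntervalIntegrable lsin volume (π/2) π := by
    have := lsin_int_half.comp_sub_left π
    have heq : (fun x => lsin (π - x)) = lsin := funext lsin_reflect
    rw [heq] at this
    rw [show π - π/2 = π/2 by ring, show π - 0 = π by ring] at this
    exact this.symm
  exact lsin_int_half.trans h2

lemma lsin_int_big : IntervalIntegrable lsin volume (-π) (2*π) := by
  have hl : IntervalIntegrable lsin volume (-π) 0 := by
    have := lsin_int_0pi.comp_add_right π
    have heq : (fun x => lsin (x + π)) = lsin := funext fun x => lsin_periodic x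
    rw [heq] at this; simpa using this
  have hr : IntervalIntegrable lsin volume π (2*π) := by
    have := lsin_int_0pi.comp_sub_right π
    have heq : (fun x => lsin (x - π)) = lsin := funext fun x => by
      have := lsin_periodic (x - π); simpa using this.symm
    rw [heq] at this
    have e1 : (0:ℝ) + π = π := by ring
    have e2 : π + π = 2*π := by ring
    rwa [e1, e2] at this
  exact (hl.trans lsin_int_0pi).trans hr

lemma lsin_int {a b : ℝ} (ha : a ∈ Icc (-π) (2*π)) (hb : b ∈ Icc (-π) (2*π)) :
    IntervalIntegrable lsin volume a b :=
  lsin_int_big.mono_set (uIcc_subset_uIcc (by simpa [uIcc_of_le (by linarith [Real.pi_pos] : -π ≤ 2*π)] using ha)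
    (by simpa [uIcc_of_le (by linarith [Real.pi_pos] : -π ≤ 2*π)] using hb))

lemma lsin_mul_int {ψ : ℝ → ℝ} (hψ : Continuous ψ) {a b : ℝ}
    (ha : a ∈ Icc (-π) (2*π)) (hb : b ∈ Icc (-π) (2*π)) :
    IntervalIntegrable (fun u => lsin u * ψ u) volume a b :=
  (lsin_int ha hb).mul_continuousOn hψ.continuousOn

lemma pi_mem : ∀ a ∈ Icc (0:ℝ) π, a ∈ Icc (-π) (2*π) := by
  intro a ha
  constructor <;> [linarith [ha.1, Real.pi_pos]; linarith [ha.2, Real.pi_pos]]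

lemma lsin_two_halves : ∫ u in (0:ℝ)..π, lsin u = 2 * ∫ u in (0:ℝ)..(π/2), lsin u := by
  have hsplit : ∫ u in (0:ℝ)..π, lsin u
      = (∫ u in (0:ℝ)..(π/2), lsin u) + ∫ u in (π/2:ℝ)..π, lsin u :=
    (integral_add_adjacent_intervals lsin_int_half
      (lsin_int_0pi.symm.trans lsin_int_half).symm).symm
  have hrefl : ∫ u in (π/2:ℝ)..π, lsin u = ∫ u in (0:ℝ)..(π/2), lsin u := by
    have := intervalIntegral.integral_comp_sub_left (a := (π/2:ℝ)) (b := π) lsin π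
    rw [show π - π = (0:ℝ) by ring, show π - π/2 = π/2 by ring] at this
    rw [← this]
    congr 1
    exact funext fun x => (lsin_reflect x).symm
  rw [hsplit, hrefl]; ring

lemma lsin_half_val : ∫ u in (0:ℝ)..(π/2), lsin u = -(π/2) * Real.log 2 := by
  set K := ∫ u in (0:ℝ)..(π/2), lsin u with hK
  have hcosint : IntervalIntegrable (fun u => Real.log |Real.cos u|) volume 0 (π/2) := by
    have := lsin_int_half.comp_sub_left (π/2)
    rw [show π/2 - π/2 = (0:ℝ) by ring, show π/2 - 0 = π/2 by ring] at this
    have heq : (fun x => lsin (π/2 - x)) = fun u => Real.log |Real.cos u| := by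
      funext x; simp [lsin, Real.sin_pi_div_two_sub]
    rw [heq] at this; exact this.symm
  have hcos : ∫ u in (0:ℝ)..(π/2), Real.log |Real.cos u| = K := by
    have := intervalIntegral.integral_comp_sub_left (a := (0:ℝ)) (b := π/2) lsin (π/2)
    rw [show π/2 - π/2 = (0:ℝ) by ring, show π/2 - 0 = π/2 by ring] at this
    have heq : (fun x => lsin (π/2 - x)) = fun u => Real.log |Real.cos u| := by
      funext x; simp [lsin, Real.sin_pi_div_two_sub]
    exact ((intervalIntegral.integral_congr (fun x _ => congrFun heq x)).symm).trans this
  have hdup : ∫ u in (0:ℝ)..(π/2), lsin (2*u) = K := by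
    have := intervalIntegral.integral_comp_mul_left (a := (0:ℝ)) (b := π/2) lsin (c := 2) two_ne_zero
    rw [this]
    rw [show (2:ℝ) * (π/2) = π by ring, show (2:ℝ) * 0 = 0 by ring]
    rw [lsin_two_halves, smul_eq_mul, ← hK]
    ring
  have hae : ∫ u in (0:ℝ)..(π/2), lsin (2*u)
      = ∫ u in (0:ℝ)..(π/2), (Real.log 2 + lsin u + Real.log |Real.cos u|) := by
    apply intervalIntegral.integral_congr_ae
    have hne : ∀ᵐ u : ℝ, u ≠ π/2 := by
      have : (volume : Measure ℝ) {(π/2 : ℝ)} = 0 := Real.volume_singleton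
      exact (MeasureTheory.measure_eq_zero_iff_ae_notMem.mp this).mono (by intro x hx; simpa using hx)
    filter_upwards [hne] with u hu hmem
    rw [Set.uIoc_of_le (by positivity : (0:ℝ) ≤ π/2)] at hmem
    have hu0 : 0 < u := hmem.1
    have hu2 : u < π/2 := lt_of_le_of_ne hmem.2 hu
    have hs : Real.sin u ≠ 0 := (Real.sin_pos_of_pos_of_lt_pi hu0 (by linarith [Real.pi_pos])).ne'
    have hc : Real.cos u ≠ 0 := (Real.cos_pos_of_mem_Ioo ⟨by linarith [Real.pi_pos], hu2⟩).ne'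
    rw [lsin, lsin, Real.sin_two_mul, Real.log_abs, Real.log_abs, Real.log_abs,
      Real.log_mul (mul_ne_zero two_ne_zero hs) hc, Real.log_mul two_ne_zero hs]
  have hsum : ∫ u in (0:ℝ)..(π/2), (Real.log 2 + lsin u + Real.log |Real.cos u|)
      = (π/2) * Real.log 2 + K + K := by
    rw [intervalIntegral.integral_add (IntervalIntegrable.add
        (intervalIntegrable_const) lsin_int_half) hcosint,
      intervalIntegral.integral_add intervalIntegrable_const lsin_int_half]
    rw [hcos, intervalIntegral.integral_const, smul_eq_mul, ← hK]
    ring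
  have : K = (π/2) * Real.log 2 + K + K := by rw [← hsum, ← hae, hdup]
  linarith

lemma lsin_0pi_val : ∫ u in (0:ℝ)..π, lsin u = -π * Real.log 2 := by
  rw [lsin_two_halves, lsin_half_val]; ring

lemma lsin_sin4_val : ∫ u in (0:ℝ)..π, lsin u * Real.sin (4*u) = 0 := by
  have h := intervalIntegral.integral_comp_sub_left (a := (0:ℝ)) (b := π)
    (fun u => lsin u * Real.sin (4*u)) π
  rw [show π - π = (0:ℝ) by ring, show π - 0 = π by ring] at h
  have heq : ∀ x, lsin (π - x) * Real.sin (4*(π-x)) = -(lsin x * Real.sin (4*x)) := by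
    intro x
    have h4 : Real.sin (4*(π-x)) = - Real.sin (4*x) := by
      rw [show 4*(π-x) = (-(4*x) + 2*π) + 2*π by ring, Real.sin_add_two_pi,
        Real.sin_add_two_pi, Real.sin_neg]
    rw [lsin_reflect, h4]; ring
  have h2 : ∫ x in (0:ℝ)..π, lsin (π - x) * Real.sin (4*(π-x))
      = - ∫ x in (0:ℝ)..π, lsin x * Real.sin (4*x) := by
    rw [← intervalIntegral.integral_neg]
    exact intervalIntegral.integral_congr (fun x _ => heq x)
  have := h2.symm.trans h
  linarith

lemma lsin_cos4_val : ∫ u in (0:ℝ)..π, lsin u * Real.cos (4*u) = -π/4 := by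
  set H : ℝ → ℝ := fun v => (Real.sin v * Real.log (Real.sin v)) * ((8*Real.cos v^3 - 4*Real.cos v)/4)
    - (v + Real.sin (2*v) + Real.sin (4*v)/4)/4 with hH
  have hcont : ContinuousOn H (Icc 0 π) := by
    apply Continuous.continuousOn
    apply Continuous.sub
    · exact ((Real.continuous_mul_log.comp Real.continuous_sin).mul
        ((((continuous_const.mul (Real.continuous_cos.pow 3)).sub
          (continuous_const.mul Real.continuous_cos))).div_const 4))
    · apply Continuous.div_const
      exact (continuous_id.add (Real.continuous_sin.comp (continuous_const.mul continuous_id))).add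
        ((Real.continuous_sin.comp (continuous_const.mul continuous_id)).div_const 4)
  have key : ∀ u ∈ Ioo (0:ℝ) π, HasDerivAt H (lsin u * Real.cos (4*u)) u := by
    intro u hu
    have hs : 0 < Real.sin u := Real.sin_pos_of_pos_of_lt_pi hu.1 hu.2
    have h1 : HasDerivAt (fun v => Real.sin v * Real.log (Real.sin v))
        ((Real.log (Real.sin u) + 1) * Real.cos u) u :=
      (Real.hasDerivAt_mul_log hs.ne').comp u (Real.hasDerivAt_sin u)
    have hcos := Real.hasDerivAt_cos u
    have h2 : HasDerivAt (fun v => (8*Real.cos v^3 - 4*Real.cos v)/4)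
        ((8*(3*Real.cos u^2*(-Real.sin u)) - 4*(-Real.sin u))/4) u := by
      have := (((hcos.pow 3).const_mul (8:ℝ)).sub (hcos.const_mul (4:ℝ))).div_const (4:ℝ)
      refine this.congr_deriv ?_; norm_num
    have h3 : HasDerivAt (fun v => Real.sin (2*v)) (2*Real.cos (2*u)) u := by
      have := (Real.hasDerivAt_sin (2*u)).comp u ((hasDerivAt_id u).const_mul (2:ℝ))
      exact this.congr_deriv (by ring)
    have h4 : HasDerivAt (fun v => Real.sin (4*v)) (4*Real.cos (4*u)) u := by
      have := (Real.hasDerivAt_sin (4*u)).comp u ((hasDerivAt_id u).const_mul (4:ℝ))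
      exact this.congr_deriv (by ring)
    have hQ : HasDerivAt (fun v => (v + Real.sin (2*v) + Real.sin (4*v)/4)/4)
        ((1 + 2*Real.cos (2*u) + (4*Real.cos (4*u))/4)/4) u :=
      (((hasDerivAt_id u).add h3).add (h4.div_const 4)).div_const 4
    have hD := (h1.mul h2).sub hQ
    have hls : lsin u = Real.log (Real.sin u) := by rw [lsin, abs_of_pos hs]
    rw [hH]
    refine hD.congr_deriv (Eq.symm ?_)
    rw [hls]
    have c2 : Real.cos (2*u) = 2*Real.cos u^2 - 1 := Real.cos_two_mul u
    have c4 : Real.cos (4*u) = 2*Real.cos (2*u)^2 - 1 := by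
      rw [show (4:ℝ)*u = 2*(2*u) by ring]; exact Real.cos_two_mul (2*u)
    have pyth := Real.sin_sq_add_cos_sq u
    rw [c4, c2]
    linear_combination (Real.log (Real.sin u) * (6*Real.cos u^2 - 1)) * pyth
  have hint : IntervalIntegrable (fun u => lsin u * Real.cos (4*u)) volume 0 π :=
    lsin_mul_int (Real.continuous_cos.comp (continuous_const.mul continuous_id))
      (pi_mem 0 ⟨le_refl 0, Real.pi_pos.le⟩) (pi_mem π ⟨Real.pi_pos.le, le_refl π⟩)
  rw [intervalIntegral.integral_eq_sub_of_hasDeriv_right_of_le Real.pi_pos.le hcont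
    (fun u hu => (key u hu).hasDerivWithinAt) hint]
  have s4 : Real.sin (4*π) = 0 := by
    rw [show (4:ℝ)*π = 2*(2*π) by ring, Real.sin_two_mul, Real.sin_two_pi]; ring
  rw [hH]
  simp [Real.sin_pi, Real.sin_two_pi, s4, Real.sin_zero]
  ring

noncomputable def wfun (θ : ℝ) : ℝ := 2 - 2*Real.cos (2*θ)

lemma wfun_cont : Continuous wfun := by
  unfold wfun
  exact continuous_const.sub (continuous_const.mul
    (Real.continuous_cos.comp (continuous_const.mul continuous_id)))

noncomputable def fAux (c : ℝ) (u : ℝ) : ℝ := lsin u * wfun (2*u + c)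

lemma fAux_int (c : ℝ) {a b : ℝ} (ha : a ∈ Icc (-π) (2*π)) (hb : b ∈ Icc (-π) (2*π)) :
    IntervalIntegrable (fAux c) volume a b :=
  lsin_mul_int (wfun_cont.comp ((continuous_const.mul continuous_id).add continuous_const)) ha hb

lemma fAux_periodic (c : ℝ) : Function.Periodic (fAux c) π := by
  intro u
  unfold fAux
  rw [lsin_periodic]
  congr 1
  unfold wfun
  rw [show 2*(2*(u+π)+c) = 2*(2*u+c) + 2*π + 2*π by ring, Real.cos_add_two_pi, Real.cos_add_two_pi]

lemma fAux_0pi (c : ℝ) : ∫ u in (0:ℝ)..π, fAux c u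
    = -2*π*Real.log 2 + (π/2) * Real.cos (2*c) := by
  have hexp : ∀ u, fAux c u = 2*lsin u - 2*Real.cos (2*c) * (lsin u * Real.cos (4*u))
      + 2*Real.sin (2*c) * (lsin u * Real.sin (4*u)) := by
    intro u
    show lsin u * (2 - 2*Real.cos (2*(2*u+c))) = _
    rw [show 2*(2*u+c) = 4*u + 2*c by ring, Real.cos_add]
    ring
  have h0 : (0:ℝ) ∈ Icc (-π) (2*π) := pi_mem 0 ⟨le_refl 0, Real.pi_pos.le⟩
  have hπ : π ∈ Icc (-π) (2*π) := pi_mem π ⟨Real.pi_pos.le, le_refl π⟩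
  have i1 : IntervalIntegrable (fun u => 2*lsin u) volume 0 π := (lsin_int h0 hπ).const_mul 2
  have i2 : IntervalIntegrable (fun u => 2*Real.cos (2*c) * (lsin u * Real.cos (4*u))) volume 0 π :=
    (lsin_mul_int (Real.continuous_cos.comp (continuous_const.mul continuous_id)) h0 hπ).const_mul _
  have i3 : IntervalIntegrable (fun u => 2*Real.sin (2*c) * (lsin u * Real.sin (4*u))) volume 0 π :=
    (lsin_mul_int (Real.continuous_sin.comp (continuous_const.mul continuous_id)) h0 hπ).const_mul _
  rw [intervalIntegral.integral_congr (fun u _ => hexp u),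
    intervalIntegral.integral_add (i1.sub i2) i3, intervalIntegral.integral_sub i1 i2,
    intervalIntegral.integral_const_mul, intervalIntegral.integral_const_mul,
    intervalIntegral.integral_const_mul, lsin_0pi_val, lsin_cos4_val, lsin_sin4_val]
  ring

lemma window_sum {α : ℝ} (h0 : 0 ≤ α) (hπ : α ≤ π) :
    (∫ u in (-α/2)..((π-α)/2), fAux α u) + (∫ u in (α/2)..((π+α)/2), fAux (-α) u)
      = ∫ u in (0:ℝ)..π, fAux α u := by
  have pipos := Real.pi_pos
  have hrefl : ∫ u in (α/2)..((π+α)/2), fAux (-α) u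
      = ∫ u in ((π-α)/2)..(π - α/2), fAux α u := by
    have h := intervalIntegral.integral_comp_sub_left (a := (π-α)/2) (b := π - α/2) (fAux (-α)) π
    rw [show π - (π - α/2) = α/2 by ring, show π - (π-α)/2 = (π+α)/2 by ring] at h
    rw [← h]
    apply intervalIntegral.integral_congr
    intro v _
    show fAux (-α) (π - v) = fAux α v
    unfold fAux
    rw [lsin_reflect]
    congr 1
    unfold wfun
    rw [show 2*(2*(π-v) + -α) = -(2*(2*v+α)) + 2*π + 2*π by ring, Real.cos_add_two_pi,
      Real.cos_add_two_pi, Real.cos_neg]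
  rw [hrefl]
  have hadj : (∫ u in (-α/2)..((π-α)/2), fAux α u) + (∫ u in ((π-α)/2)..(π - α/2), fAux α u)
      = ∫ u in (-α/2)..(π - α/2), fAux α u := by
    apply intervalIntegral.integral_add_adjacent_intervals
    · exact fAux_int α ⟨by linarith, by linarith⟩ ⟨by linarith, by linarith⟩
    · exact fAux_int α ⟨by linarith, by linarith⟩ ⟨by linarith, by linarith⟩
  rw [hadj]
  have hp := (fAux_periodic α).intervalIntegral_add_eq (-α/2) 0
  rw [show -α/2 + π = π - α/2 by ring, zero_add] at hp
  exact hp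

lemma theta_int {c : ℝ} (hc : c ∈ Icc (-π) π) :
    IntervalIntegrable (fun θ => lsin ((θ + c)/2) * wfun θ) volume 0 π := by
  have pipos := Real.pi_pos
  have h0 : IntervalIntegrable (fAux (-c)) volume (c/2) ((π+c)/2) :=
    fAux_int (-c) ⟨by linarith [hc.1], by linarith [hc.2]⟩ ⟨by linarith [hc.1], by linarith [hc.2]⟩
  have h1 := h0.comp_add_right (c/2)
  rw [show c/2 - c/2 = (0:ℝ) by ring, show (π+c)/2 - c/2 = π/2 by ring] at h1
  have h2 := h1.comp_mul_left (c := 1/2)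
  rw [show (0:ℝ) / (1/2) = 0 by norm_num, show (π/2) / (1/2 : ℝ) = π by field_simp] at h2
  have heq : (fun x => fAux (-c) (1/2 * x + c/2)) = (fun θ => lsin ((θ + c)/2) * wfun θ) := by
    funext x
    unfold fAux
    rw [show 1/2 * x + c/2 = (x+c)/2 by ring, show 2*((x+c)/2) + -c = x by ring]
  rwa [heq] at h2

lemma theta_val (c : ℝ) : ∫ θ in (0:ℝ)..π, lsin ((θ + c)/2) * wfun θ
    = 2 * ∫ u in (c/2)..((π+c)/2), fAux (-c) u := by
  have heq : ∀ θ, lsin ((θ + c)/2) * wfun θ = fAux (-c) (1/2 * θ + c/2) := by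
    intro θ
    unfold fAux
    rw [show 1/2 * θ + c/2 = (θ+c)/2 by ring, show 2*((θ+c)/2) + -c = θ by ring]
  rw [intervalIntegral.integral_congr (fun θ _ => heq θ),
    intervalIntegral.integral_comp_mul_add (fAux (-c)) (by norm_num : (1/2:ℝ) ≠ 0) (c/2)]
  rw [show 1/2 * 0 + c/2 = c/2 by ring, show 1/2 * π + c/2 = (π+c)/2 by ring, smul_eq_mul]
  norm_num

lemma key_integral (x : ℝ) (hx : x ∈ Set.Icc (-2 : ℝ) 2) :
    ∫ t in (-2 : ℝ)..2, Real.log |x - t| * Real.sqrt (4 - t ^ 2) = π * (x^2/2 - 1) := by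
  have pipos := Real.pi_pos
  set α := Real.arccos (x/2) with hα
  have hα0 : 0 ≤ α := Real.arccos_nonneg _
  have hαπ : α ≤ π := Real.arccos_le_pi _
  have hcosα : Real.cos α = x/2 := Real.cos_arccos (by linarith [hx.1]) (by linarith [hx.2])
  -- Step 1 : substitution t = 2 cos θ
  have himg : (fun θ : ℝ => 2*Real.cos θ) '' (Ioo 0 π) = Ioo (-2:ℝ) 2 := by
    ext y
    constructor
    · rintro ⟨θ, hθ, rfl⟩
      have h1 : Real.cos θ < Real.cos 0 :=
        Real.strictAntiOn_cos ⟨le_refl 0, pipos.le⟩ ⟨hθ.1.le, hθ.2.le⟩ hθ.1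
      have h2 : Real.cos π < Real.cos θ :=
        Real.strictAntiOn_cos ⟨hθ.1.le, hθ.2.le⟩ ⟨pipos.le, le_refl π⟩ hθ.2
      rw [Real.cos_zero] at h1; rw [Real.cos_pi] at h2
      show -2 < 2*Real.cos θ ∧ 2*Real.cos θ < 2
      constructor <;> linarith
    · intro hy
      refine ⟨Real.arccos (y/2), ⟨?_, ?_⟩, ?_⟩
      · exact Real.arccos_pos.2 (by linarith [hy.2])
      · have hle := Real.arccos_le_pi (y/2)
        have hne : Real.arccos (y/2) ≠ π := by
          intro h
          have := Real.arccos_eq_pi.1 h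
          linarith [hy.1]
        exact lt_of_le_of_ne hle hne
      · show 2*Real.cos (Real.arccos (y/2)) = y
        rw [Real.cos_arccos (by linarith [hy.1]) (by linarith [hy.2])]
        ring
  have hder : ∀ θ ∈ Ioo (0:ℝ) π, HasDerivWithinAt (fun θ : ℝ => 2*Real.cos θ)
      (-2*Real.sin θ) (Ioo 0 π) θ := by
    intro θ _
    have := (Real.hasDerivAt_cos θ).const_mul (2:ℝ)
    have h2 : HasDerivAt (fun θ : ℝ => 2*Real.cos θ) (-2*Real.sin θ) θ := by
      exact this.congr_deriv (by ring)
    exact h2.hasDerivWithinAt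
  have hinj : InjOn (fun θ : ℝ => 2*Real.cos θ) (Ioo 0 π) := by
    intro a ha b hb hab
    have : Real.cos a = Real.cos b := by
      simp only at hab; linarith
    exact Real.injOn_cos ⟨ha.1.le, ha.2.le⟩ ⟨hb.1.le, hb.2.le⟩ this
  have hsub := MeasureTheory.integral_image_eq_integral_abs_deriv_smul measurableSet_Ioo hder hinj
    (fun t => Real.log |x - t| * Real.sqrt (4 - t ^ 2))
  rw [himg] at hsub
  have step1 : ∫ t in (-2 : ℝ)..2, Real.log |x - t| * Real.sqrt (4 - t ^ 2)
      = ∫ θ in (0:ℝ)..π, Real.log |x - 2*Real.cos θ| * wfun θ := by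
    rw [intervalIntegral.integral_of_le (by norm_num : (-2:ℝ) ≤ 2),
      MeasureTheory.integral_Ioc_eq_integral_Ioo, hsub,
      intervalIntegral.integral_of_le pipos.le, MeasureTheory.integral_Ioc_eq_integral_Ioo]
    apply MeasureTheory.setIntegral_congr_fun measurableSet_Ioo
    intro θ hθ
    have hsθ : 0 < Real.sin θ := Real.sin_pos_of_pos_of_lt_pi hθ.1 hθ.2
    have hsqrt : Real.sqrt (4 - (2*Real.cos θ) ^ 2) = 2*Real.sin θ := by
      rw [show 4 - (2*Real.cos θ)^2 = (2*Real.sin θ)^2 by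
        have := Real.sin_sq_add_cos_sq θ; nlinarith]
      exact Real.sqrt_sq (by positivity)
    show |(-2)*Real.sin θ| • (Real.log |x - 2*Real.cos θ| * Real.sqrt (4 - (2*Real.cos θ) ^ 2))
      = Real.log |x - 2*Real.cos θ| * wfun θ
    rw [hsqrt, abs_of_nonpos (by nlinarith : (-2)*Real.sin θ ≤ 0), smul_eq_mul]
    have hw : wfun θ = (2*Real.sin θ) * (2*Real.sin θ) := by
      unfold wfun
      rw [Real.cos_two_mul']
      have := Real.sin_sq_add_cos_sq θ
      nlinarith
    rw [hw]
    ring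
  -- Step 2 : a.e. factorization
  have step2 : ∫ θ in (0:ℝ)..π, Real.log |x - 2*Real.cos θ| * wfun θ
      = ∫ θ in (0:ℝ)..π, (Real.log 4 + lsin ((θ + α)/2) + lsin ((θ + (-α))/2)) * wfun θ := by
    apply intervalIntegral.integral_congr_ae
    have hne : ∀ᵐ θ : ℝ, θ ≠ α ∧ θ ≠ π := by
      have h1 : (volume : Measure ℝ) ({α} ∪ {π}) = 0 := by
        apply measure_union_null <;> exact Real.volume_singleton
      have := MeasureTheory.measure_eq_zero_iff_ae_notMem.mp h1
      filter_upwards [this] with θ hθ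
      simp only [Set.mem_union, Set.mem_singleton_iff] at hθ
      exact ⟨fun h => hθ (Or.inl h), fun h => hθ (Or.inr h)⟩
    filter_upwards [hne] with θ hθ hmem
    obtain ⟨hθα, hθπ⟩ := hθ
    rw [Set.uIoc_of_le pipos.le] at hmem
    have hθ0 : 0 < θ := hmem.1
    have hθπ' : θ < π := lt_of_le_of_ne hmem.2 hθπ
    have hs1 : Real.sin ((θ + α)/2) ≠ 0 := by
      have : 0 < (θ + α)/2 := by linarith
      have : (θ + α)/2 < π := by linarith
      exact (Real.sin_pos_of_pos_of_lt_pi (by linarith) this).ne'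
    have hs2 : Real.sin ((θ - α)/2) ≠ 0 := by
      rw [Ne, Real.sin_eq_zero_iff_of_lt_of_lt (by linarith) (by linarith)]
      intro h
      apply hθα
      have : θ - α = 0 := by linarith
      linarith
    have hfact : x - 2*Real.cos θ = 4 * Real.sin ((θ + α)/2) * Real.sin ((θ - α)/2) := by
      have h := Real.cos_sub_cos α θ
      have hx2 : x = 2 * Real.cos α := by rw [hcosα]; ring
      rw [hx2]
      rw [show 2*Real.cos α - 2*Real.cos θ = 2*(Real.cos α - Real.cos θ) by ring, h]
      rw [show (α - θ)/2 = -((θ - α)/2) by ring, Real.sin_neg,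
        show (α + θ)/2 = (θ + α)/2 by ring]
      ring
    congr 1
    rw [hfact, abs_mul, abs_mul,
      Real.log_mul (mul_ne_zero (by norm_num) (abs_ne_zero.2 hs1)) (abs_ne_zero.2 hs2),
      Real.log_mul (by norm_num : |(4:ℝ)| ≠ 0) (abs_ne_zero.2 hs1)]
    unfold lsin
    simp only [Real.log_abs, show θ + -α = θ - α from by ring]
  -- Step 3: split and evaluate
  have h0m : (0:ℝ) ∈ Icc (-π) (2*π) := pi_mem 0 ⟨le_refl 0, pipos.le⟩
  have hπm : π ∈ Icc (-π) (2*π) := pi_mem π ⟨pipos.le, le_refl π⟩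
  have iw : IntervalIntegrable (fun θ => Real.log 4 * wfun θ) volume 0 π :=
    ((continuous_const.mul wfun_cont).intervalIntegrable 0 π : _)
  have ip : IntervalIntegrable (fun θ => lsin ((θ + α)/2) * wfun θ) volume 0 π :=
    theta_int ⟨by linarith, hαπ⟩
  have im : IntervalIntegrable (fun θ => lsin ((θ + (-α))/2) * wfun θ) volume 0 π :=
    theta_int ⟨by linarith, by linarith⟩
  have hw0 : ∫ θ in (0:ℝ)..π, wfun θ = 2*π := by
    unfold wfun
    have hcos2 : ∫ θ in (0:ℝ)..π, Real.cos (2*θ) = 0 := by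
      rw [intervalIntegral.integral_comp_mul_left Real.cos (two_ne_zero)]
      norm_num [integral_cos]
    rw [intervalIntegral.integral_sub intervalIntegrable_const
      ((by fun_prop : Continuous fun θ : ℝ => 2*Real.cos (2*θ)).intervalIntegrable 0 π)]
    rw [intervalIntegral.integral_const_mul, hcos2, intervalIntegral.integral_const, smul_eq_mul]
    ring
  have hsplit : ∫ θ in (0:ℝ)..π, (Real.log 4 + lsin ((θ + α)/2) + lsin ((θ + (-α))/2)) * wfun θ
      = Real.log 4 * (2*π) + (∫ θ in (0:ℝ)..π, lsin ((θ + α)/2) * wfun θ)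
        + ∫ θ in (0:ℝ)..π, lsin ((θ + (-α))/2) * wfun θ := by
    have heq : ∀ θ, (Real.log 4 + lsin ((θ + α)/2) + lsin ((θ + (-α))/2)) * wfun θ
        = Real.log 4 * wfun θ + lsin ((θ + α)/2) * wfun θ + lsin ((θ + (-α))/2) * wfun θ := by
      intro θ; ring
    rw [intervalIntegral.integral_congr (fun θ _ => heq θ),
      intervalIntegral.integral_add (iw.add ip) im, intervalIntegral.integral_add iw ip,
      intervalIntegral.integral_const_mul, hw0]
  -- Step 4: combine window integrals
  have hval : (∫ θ in (0:ℝ)..π, lsin ((θ + α)/2) * wfun θ)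
      + (∫ θ in (0:ℝ)..π, lsin ((θ + (-α))/2) * wfun θ)
      = 2 * (-2*π*Real.log 2 + (π/2) * Real.cos (2*α)) := by
    rw [theta_val α, theta_val (-α)]
    have hws := window_sum hα0 hαπ
    have e1 : -(-α) = α := by ring
    rw [e1]
    rw [show (π + -α)/2 = (π-α)/2 by ring, show (-α)/2 = -α/2 by ring]
    rw [fAux_0pi] at hws
    linarith [hws]
  -- Final assembly
  rw [step1, step2, hsplit]
  have harr : (∫ θ in (0:ℝ)..π, lsin ((θ + α)/2) * wfun θ)
      + (∫ θ in (0:ℝ)..π, lsin ((θ + (-α))/2) * wfun θ)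
      = -4*π*Real.log 2 + π * Real.cos (2*α) := by rw [hval]; ring
  have hlog4 : Real.log 4 = 2 * Real.log 2 := by
    rw [show (4:ℝ) = 2^2 by norm_num, Real.log_pow]
    push_cast; ring
  have hcos2α : Real.cos (2*α) = x^2/2 - 1 := by
    rw [Real.cos_two_mul, hcosα]
    ring
  rw [add_assoc, harr, hlog4, hcos2α]
  ring


/-- For `x ∈ [-2,2]`, the logarithmic potential of the semicircle density satisfies
`(1/(2π)) ∫_{-2}^{2} log|x-t| √(4-t²) dt = x²/4 - 1/2`; consequently the total
electrostatic potential `U(x) = x²/2 - 2∫ log|x-t| ρ(t) dt` equals `1` on `[-2,2]`. -/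
theorem semicircle_log_potential (x : ℝ) (hx : x ∈ Set.Icc (-2 : ℝ) 2) :
    (1 / (2 * Real.pi)) * ∫ t in (-2 : ℝ)..2, Real.log |x - t| * Real.sqrt (4 - t ^ 2)
      = x ^ 2 / 4 - 1 / 2 ∧
    x ^ 2 / 2 -
        2 * ∫ t in (-2 : ℝ)..2, Real.log |x - t| * (Real.sqrt (4 - t ^ 2) / (2 * Real.pi))
      = 1 := by
  have hkey := key_integral x hx
  have hpi : Real.pi ≠ 0 := Real.pi_ne_zero
  constructor
  · rw [hkey]
    field_simp
    ring
  · have h2 : ∫ t in (-2 : ℝ)..2, Real.log |x - t| * (Real.sqrt (4 - t ^ 2) / (2 * Real.pi))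
        = (∫ t in (-2 : ℝ)..2, Real.log |x - t| * Real.sqrt (4 - t ^ 2)) * (1 / (2 * Real.pi)) := by
      rw [← intervalIntegral.integral_mul_const]
      apply intervalIntegral.integral_congr
      intro t _
      ring
    rw [h2, hkey]
    field_simp
    ring
end

section
/- Let t, β, δ ∈ ℂ satisfy 2β² + δ² = 2t, βδ² = 2, and δ ≠ 0. Let U ⊆ ℂ be open and let w, L : U → ℂ be holomorphic functions with w(z)² = (z − β)² − δ², w(z) ≠ 0, and exp(L(z)) = (β − z − w(z))/δ for all z ∈ U. Define G(z) = (1/3)·w(z)·(z² + βz + β² − 3t + δ²/2) − 2·L(z). Then G′(z) = (z + β)·w(z) for all z ∈ U. -/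
/-- Closed form of the `G`-function of the cubic model in the one-cut phase:
with `2β² + δ² = 2t`, `βδ² = 2`, `δ ≠ 0`, and holomorphic `w, L` on an open `U`
satisfying `w(z)² = (z-β)² - δ²`, `w(z) ≠ 0` and `exp(L(z)) = (β - z - w(z))/δ`,
the function `G(z) = (1/3)·w(z)·(z² + βz + β² - 3t + δ²/2) - 2·L(z)` has derivative
`G'(z) = (z+β)·w(z)` on `U`. -/
theorem cubic_G_function_derivative (β δ t : ℂ)
    (h₁ : 2 * β ^ 2 + δ ^ 2 = 2 * t) (h₂ : β * δ ^ 2 = 2) (hδ : δ ≠ 0)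
    (U : Set ℂ) (hU : IsOpen U) (w L : ℂ → ℂ)
    (hw : DifferentiableOn ℂ w U) (hL : DifferentiableOn ℂ L U)
    (hwsq : ∀ z ∈ U, (w z) ^ 2 = (z - β) ^ 2 - δ ^ 2)
    (hwne : ∀ z ∈ U, w z ≠ 0)
    (hexp : ∀ z ∈ U, Complex.exp (L z) = (β - z - w z) / δ) :
    ∀ z ∈ U,
      HasDerivAt
        (fun z : ℂ =>
          (1 / 3) * w z * (z ^ 2 + β * z + β ^ 2 - 3 * t + δ ^ 2 / 2) - 2 * L z)
        ((z + β) * w z) z := by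
  intro z hz
  have hzU : U ∈ nhds z := hU.mem_nhds hz
  have hwz : HasDerivAt w (deriv w z) z :=
    ((hw z hz).differentiableAt hzU).hasDerivAt
  have hLz : HasDerivAt L (deriv L z) z :=
    ((hL z hz).differentiableAt hzU).hasDerivAt
  set s := w z with hs
  set w' := deriv w z with hw'def
  set L' := deriv L z with hL'def
  have hsne : s ≠ 0 := hwne z hz
  -- derivative relation for w
  have hsq : HasDerivAt (fun z => w z ^ 2) (2 * s * w') z := by
    have := hwz.pow 2
    refine this.congr_deriv ?_
    ring
  have hpoly : HasDerivAt (fun z : ℂ => (z - β) ^ 2 - δ ^ 2) (2 * (z - β)) z := by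
    have h := (((hasDerivAt_id z).sub_const β).pow 2).sub_const (δ ^ 2)
    simpa using h
  have heq : (fun z => w z ^ 2) =ᶠ[nhds z] (fun z => (z - β) ^ 2 - δ ^ 2) :=
    Filter.eventuallyEq_of_mem hzU hwsq
  have hsq' : HasDerivAt (fun z => w z ^ 2) (2 * (z - β)) z :=
    hpoly.congr_of_eventuallyEq heq
  have hA : s * w' = z - β := by
    have h2 := hsq.unique hsq'
    linear_combination h2 / 2
  -- derivative relation for L
  have hexpd : HasDerivAt (fun z => Complex.exp (L z)) (Complex.exp (L z) * L') z :=
    hLz.cexp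
  have hlin : HasDerivAt (fun z => (β - z - w z) / δ) ((-1 - w') / δ) z := by
    have h1 : HasDerivAt (fun z : ℂ => β - z) (-1) z := by
      simpa using (hasDerivAt_id z).const_sub β
    exact (h1.sub hwz).div_const δ
  have heq2 : (fun z => Complex.exp (L z)) =ᶠ[nhds z] (fun z => (β - z - w z) / δ) :=
    Filter.eventuallyEq_of_mem hzU hexp
  have hexpd' : HasDerivAt (fun z => Complex.exp (L z)) ((-1 - w') / δ) z :=
    hlin.congr_of_eventuallyEq heq2
  have hB : Complex.exp (L z) * L' = (-1 - w') / δ := hexpd.unique hexpd'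
  rw [hexp z hz] at hB
  have hne : β - z - s ≠ 0 := by
    intro h
    have := Complex.exp_ne_zero (L z)
    rw [hexp z hz, h] at this
    simp at this
  have hB' : (β - z - s) * L' = -1 - w' := by
    field_simp at hB
    linear_combination hB
  have hsL : s * L' = 1 := by
    have key : (β - z - s) * (s * L') = (β - z - s) * 1 := by
      linear_combination s * hB' - hA
    exact mul_left_cancel₀ hne key
  -- assemble
  have hP : HasDerivAt (fun z : ℂ => z ^ 2 + β * z + β ^ 2 - 3 * t + δ ^ 2 / 2)
      (2 * z + β) z := by
    have h := (((hasDerivAt_pow 2 z).add ((hasDerivAt_id z).const_mul β)).add_const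
        (β ^ 2)).sub_const (3 * t)
    have h2 := h.add_const (δ ^ 2 / 2)
    refine h2.congr_deriv ?_
    simp
  have hG := ((hwz.const_mul ((1:ℂ)/3)).mul hP).sub (hLz.const_mul 2)
  refine hG.congr_deriv ?_
  symm
  have hs2 : s ^ 2 = (z - β) ^ 2 - δ ^ 2 := hwsq z hz
  have h3s : (3 : ℂ) * s ≠ 0 := mul_ne_zero (by norm_num) hsne
  apply mul_right_cancel₀ h3s
  linear_combination (-(z ^ 2 + β * z + β ^ 2 - 3 * t + δ ^ 2 / 2)) * hA + 6 * hsL +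
    (z + 2 * β) * hs2 - (3 / 2) * (z - β) * h₁ - 3 * h₂
end
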